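/- Let O_sk be a binary operation taking skeletons on games A and B to a skeleton on a game D, and define an operation O on strategies by O(σ, τ) = O_sk(φ, ψ)•, where φ is any skeleton of σ and ψ any skeleton of τ. Then O is well-defined (independent of the choice of skeletons) and monotone with respect to subset inclusion of strategies if and only if O_sk is monotone with respect to the preorder ⊑ on skeletons (φ ⊑ φ' and ψ ⊑ ψ' imply O_sk(φ, ψ) ⊑ O_sk(φ', ψ')). -/
import Mathlib


/- Justified AJM games, after Abramsky's game semantics for access control. -/

namespace AJM

inductive Pol where
  | P
  | O
deriving DecidableEq

inductive QA where
  | Q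
  | Ans
deriving DecidableEq

def Pol.flip : Pol → Pol
  | .P => .O
  | .O => .P

/-- Well-bracketed strings over moves (condition (p4)). -/
inductive WB {M : Type} (lab : M → Pol × QA) (just : M → Option M) : List M → Prop
  | nil : WB lab just []
  | wrap (a q : M) (u : List M) : (lab a).2 = QA.Ans → just a = some q →
      WB lab just u → WB lab just (q :: (u ++ [a]))
  | append (u v : List M) : WB lab just u → WB lab just v → WB lab just (u ++ v)

/-- Conditions (p1)–(p5): Opponent starts, alternation, linearity,
well-bracketing, justifiers occur before their moves. -/
def ValidSeq {M : Type} (lab : M → Pol × QA) (just : M → Option M) (s : List M) : Prop :=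
  (∀ m, s.head? = some m → (lab m).1 = Pol.O) ∧
  List.Chain' (fun m m' => (lab m).1 ≠ (lab m').1) s ∧
  s.Nodup ∧
  (∃ t, s <+: t ∧ WB lab just t) ∧
  (∀ s₁ m s₂, s = s₁ ++ m :: s₂ → ∀ m', just m = some m' → m' ∈ s₁)

/-- A justified AJM game (the data). -/
structure Game where
  M : Type
  lab : M → Pol × QA
  just : M → Option M
  pos : Set (List M)
  equiv : List M → List M → Prop

namespace Game

/-- The axioms making the data of a `Game` an actual justified AJM game. -/
structure Valid (A : Game) : Prop where
  just_wf : WellFounded fun m m' : A.M => A.just m' = some m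
  just_pol : ∀ m m', A.just m = some m' → (A.lab m).1 ≠ (A.lab m').1
  just_qa : ∀ m m', A.just m = some m' → (A.lab m).2 = QA.Ans → (A.lab m').2 = QA.Q
  ans_justified : ∀ m, (A.lab m).2 = QA.Ans → A.just m ≠ none
  pos_nonempty : A.pos.Nonempty
  pos_prefix_closed : ∀ s t : List A.M, s <+: t → t ∈ A.pos → s ∈ A.pos
  pos_valid : ∀ s ∈ A.pos, ValidSeq A.lab A.just s
  equiv_mem : ∀ s t, A.equiv s t → s ∈ A.pos ∧ t ∈ A.pos
  equiv_refl : ∀ s ∈ A.pos, A.equiv s s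
  equiv_symm : ∀ s t, A.equiv s t → A.equiv t s
  equiv_trans : ∀ s t u, A.equiv s t → A.equiv t u → A.equiv s u
  equiv_lab : ∀ s t, A.equiv s t → s.map A.lab = t.map A.lab
  equiv_prefix : ∀ s t s' t', A.equiv s t → s' <+: s → t' <+: t →
      s'.length = t'.length → A.equiv s' t'
  equiv_ext : ∀ s t a, A.equiv s t → s ++ [a] ∈ A.pos → ∃ b, A.equiv (s ++ [a]) (t ++ [b])

/-- A strategy on a game: a non-empty set of even-length positions that is
causally consistent, representation independent and deterministic. -/
structure IsStrategy (A : Game) (σ : Set (List A.M)) : Prop where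
  subset_pos : σ ⊆ A.pos
  even_length : ∀ s ∈ σ, Even s.length
  nonempty : σ.Nonempty
  causal : ∀ s a b, s ++ [a, b] ∈ σ → s ∈ σ
  repind : ∀ s t, s ∈ σ → A.equiv s t → t ∈ σ
  det : ∀ s t a b a' b', s ++ [a, b] ∈ σ → t ++ [a', b'] ∈ σ →
      A.equiv (s ++ [a]) (t ++ [a']) → A.equiv (s ++ [a, b]) (t ++ [a', b'])

/-- A skeleton of a strategy `σ`: a non-empty, causally consistent subset of
`σ` satisfying Uniformization. -/
structure IsSkeletonOf (A : Game) (φ σ : Set (List A.M)) : Prop where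
  nonempty : φ.Nonempty
  subset : φ ⊆ σ
  causal : ∀ s a b, s ++ [a, b] ∈ φ → s ∈ φ
  uniformization : ∀ s a b, s ++ [a, b] ∈ σ → s ∈ φ → ∃! b', s ++ [a, b'] ∈ φ

/-- A skeleton in the abstract sense (independently of any strategy):
a non-empty, causally consistent set of even-length positions satisfying
Functional Determinacy and Functional Representation Independence. -/
structure IsSkeleton (A : Game) (φ : Set (List A.M)) : Prop where
  subset_pos : φ ⊆ A.pos
  even_length : ∀ s ∈ φ, Even s.length
  nonempty : φ.Nonempty
  causal : ∀ s a b, s ++ [a, b] ∈ φ → s ∈ φ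
  funDet : ∀ s a b c, s ++ [a, b] ∈ φ → s ++ [a, c] ∈ φ → b = c
  funRepInd : ∀ s t a b a', s ++ [a, b] ∈ φ → t ∈ φ →
      A.equiv (s ++ [a]) (t ++ [a']) →
      ∃! b', t ++ [a', b'] ∈ φ ∧ A.equiv (s ++ [a, b]) (t ++ [a', b'])

/-- `φ• = { t | ∃ s ∈ φ, s ≈_A t }`, the saturation of `φ` under `≈_A`. -/
def dot (A : Game) (φ : Set (List A.M)) : Set (List A.M) :=
  {t | ∃ s ∈ φ, A.equiv s t}

/-- The preorder `φ ⊑ ψ` on skeletons. -/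
def Subeq (A : Game) (φ ψ : Set (List A.M)) : Prop :=
  ∀ s a b s' a', s ++ [a, b] ∈ φ → s' ∈ ψ → A.equiv (s ++ [a]) (s' ++ [a']) →
    ∃ b', s' ++ [a', b'] ∈ ψ ∧ A.equiv (s ++ [a, b]) (s' ++ [a', b'])

end Game

end AJM


section Aux
open AJM Game

variable {A : Game}

lemma aux_exists_pair {M : Type} (l : List M) (h : l ≠ []) (he : Even l.length) :
    ∃ l₀ a b, l = l₀ ++ [a, b] := by
  rcases hr : l.reverse with _ | ⟨b, _ | ⟨a, t⟩⟩
  · exact absurd (by simpa using congrArg List.reverse hr) h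
  · have hl : l = [b] := by simpa using congrArg List.reverse hr
    simp [hl] at he
  · refine ⟨t.reverse, a, b, ?_⟩
    have hl : l = (b :: a :: t).reverse := by simpa using congrArg List.reverse hr
    simp [hl]

lemma aux_nil_mem {φ : Set (List A.M)}
    (hc : ∀ s a b, s ++ [a, b] ∈ φ → s ∈ φ)
    (he : ∀ s ∈ φ, Even s.length) (hne : φ.Nonempty) : [] ∈ φ := by
  obtain ⟨s, hs⟩ := hne
  suffices H : ∀ n (s : List A.M), s.length = n → s ∈ φ → [] ∈ φ from H _ s rfl hs
  intro n
  induction n using Nat.strong_induction_on with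
  | _ n ih =>
    intro s hn hs
    by_cases hnil : s = []
    · exact hnil ▸ hs
    · obtain ⟨l₀, a, b, rfl⟩ := aux_exists_pair s hnil (he s hs)
      exact ih l₀.length (by simp at hn; omega) l₀ rfl (hc _ _ _ hs)

lemma aux_isSkeleton (hA : A.Valid) {σ φ : Set (List A.M)}
    (hσ : IsStrategy A σ) (hφ : IsSkeletonOf A φ σ) : IsSkeleton A φ where
  subset_pos := fun s hs => hσ.subset_pos (hφ.subset hs)
  even_length := fun s hs => hσ.even_length s (hφ.subset hs)
  nonempty := hφ.nonempty
  causal := hφ.causal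
  funDet := by
    intro s a b c hb hc
    have hs : s ∈ φ := hφ.causal _ _ _ hb
    obtain ⟨b', -, hu⟩ := hφ.uniformization s a b (hφ.subset hb) hs
    exact (hu b hb).trans (hu c hc).symm
  funRepInd := by
    intro s t a b a' hsab ht heq
    have hsabσ := hφ.subset hsab
    have hpos : s ++ [a] ++ [b] ∈ A.pos := by simpa using hσ.subset_pos hsabσ
    obtain ⟨c, hc⟩ := hA.equiv_ext (s ++ [a]) (t ++ [a']) b heq hpos
    have hmem : t ++ [a', c] ∈ σ := by
      have := hσ.repind (s ++ [a] ++ [b]) (t ++ [a'] ++ [c]) (by simpa using hsabσ) hc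
      simpa using this
    obtain ⟨b', hb', hub⟩ := hφ.uniformization t a' c hmem ht
    refine ⟨b', ⟨hb', ?_⟩, ?_⟩
    · exact hσ.det s t a b a' b' hsabσ (hφ.subset hb') heq
    · rintro y ⟨hy, -⟩; exact hub y hy

lemma aux_dot_eq (hA : A.Valid) {σ φ : Set (List A.M)}
    (hσ : IsStrategy A σ) (hφ : IsSkeletonOf A φ σ) : dot A φ = σ := by
  apply Set.Subset.antisymm
  · rintro t ⟨s, hs, h⟩; exact hσ.repind s t (hφ.subset hs) h
  · intro s hs
    suffices H : ∀ n (s : List A.M), s.length = n → s ∈ σ → s ∈ dot A φ from H _ s rfl hs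
    intro n
    induction n using Nat.strong_induction_on with
    | _ n ih =>
      intro s hn hs
      by_cases hnil : s = []
      · subst hnil
        have h0 : [] ∈ φ := aux_nil_mem hφ.causal
          (fun u hu => hσ.even_length u (hφ.subset hu)) hφ.nonempty
        exact ⟨[], h0, hA.equiv_refl [] (hσ.subset_pos (hφ.subset h0))⟩
      · obtain ⟨s₀, a, b, rfl⟩ := aux_exists_pair s hnil (hσ.even_length s hs)
        have hs₀ : s₀ ∈ σ := hσ.causal _ _ _ hs
        obtain ⟨u, hu, hequ⟩ := ih s₀.length (by simp at hn; omega) s₀ rfl hs₀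
        have hequ' := hA.equiv_symm _ _ hequ
        have hpos1 : s₀ ++ [a] ∈ A.pos :=
          hA.pos_prefix_closed _ _ ⟨[b], by simp⟩ (hσ.subset_pos hs)
        obtain ⟨c, hc⟩ := hA.equiv_ext s₀ u a hequ' hpos1
        have hpos2 : s₀ ++ [a] ++ [b] ∈ A.pos := by simpa using hσ.subset_pos hs
        obtain ⟨d, hd⟩ := hA.equiv_ext (s₀ ++ [a]) (u ++ [c]) b hc hpos2
        have hmem : u ++ [c, d] ∈ σ := by
          have := hσ.repind (s₀ ++ [a] ++ [b]) (u ++ [c] ++ [d]) (by simpa using hs) hd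
          simpa using this
        obtain ⟨d', hd', -⟩ := hφ.uniformization u c d hmem hu
        refine ⟨u ++ [c, d'], hd', hA.equiv_symm _ _ ?_⟩
        exact hσ.det s₀ u a b c d' hs (hφ.subset hd') hc

lemma aux_dot_strategy (hA : A.Valid) {φ : Set (List A.M)} (hφ : IsSkeleton A φ) :
    IsStrategy A (dot A φ) where
  subset_pos := by rintro t ⟨s, hs, h⟩; exact (hA.equiv_mem s t h).2
  even_length := by
    rintro t ⟨s, hs, h⟩
    have hl : s.length = t.length := by
      have := congrArg List.length (hA.equiv_lab s t h); simpa using this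
    exact hl ▸ hφ.even_length s hs
  nonempty := by
    obtain ⟨s, hs⟩ := hφ.nonempty
    exact ⟨s, s, hs, hA.equiv_refl s (hφ.subset_pos hs)⟩
  causal := by
    rintro t a b ⟨s, hs, h⟩
    have hl : s.length = (t ++ [a, b]).length := by
      have := congrArg List.length (hA.equiv_lab _ _ h); simpa using this
    have hnil : s ≠ [] := by intro h0; subst h0; simp at hl
    obtain ⟨s₀, c, d, rfl⟩ := aux_exists_pair s hnil (hφ.even_length s hs)
    have hl₀ : s₀.length = t.length := by simp at hl; omega
    refine ⟨s₀, hφ.causal _ _ _ hs, ?_⟩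
    exact hA.equiv_prefix _ _ _ _ h ⟨[c, d], rfl⟩ ⟨[a, b], rfl⟩ hl₀
  repind := by
    rintro t t' ⟨s, hs, h⟩ h'
    exact ⟨s, hs, hA.equiv_trans _ _ _ h h'⟩
  det := by
    rintro s t a b a' b' ⟨u, hu, hequ⟩ ⟨v, hv, heqv⟩ heq
    have hlu : u.length = (s ++ [a, b]).length := by
      have := congrArg List.length (hA.equiv_lab _ _ hequ); simpa using this
    have hlv : v.length = (t ++ [a', b']).length := by
      have := congrArg List.length (hA.equiv_lab _ _ heqv); simpa using this
    have hun : u ≠ [] := by intro h0; subst h0; simp at hlu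
    have hvn : v ≠ [] := by intro h0; subst h0; simp at hlv
    obtain ⟨u₀, c, d, rfl⟩ := aux_exists_pair u hun (hφ.even_length u hu)
    obtain ⟨v₀, c', d', rfl⟩ := aux_exists_pair v hvn (hφ.even_length v hv)
    have hu₀ : u₀ ∈ φ := hφ.causal _ _ _ hu
    have hv₀ : v₀ ∈ φ := hφ.causal _ _ _ hv
    have h1 : A.equiv (u₀ ++ [c]) (s ++ [a]) := by
      refine hA.equiv_prefix _ _ _ _ hequ ⟨[d], by simp⟩ ⟨[b], by simp⟩ ?_
      simp at hlu ⊢; omega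
    have h2 : A.equiv (v₀ ++ [c']) (t ++ [a']) := by
      refine hA.equiv_prefix _ _ _ _ heqv ⟨[d'], by simp⟩ ⟨[b'], by simp⟩ ?_
      simp at hlv ⊢; omega
    have h3 : A.equiv (u₀ ++ [c]) (v₀ ++ [c']) :=
      hA.equiv_trans _ _ _ (hA.equiv_trans _ _ _ h1 heq) (hA.equiv_symm _ _ h2)
    obtain ⟨d'', ⟨hd'', heqd⟩, -⟩ := hφ.funRepInd u₀ v₀ c d c' hu hv₀ h3
    have hdd : d'' = d' := hφ.funDet v₀ c' d'' d' hd'' hv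
    subst hdd
    exact hA.equiv_trans _ _ _ (hA.equiv_symm _ _ hequ)
      (hA.equiv_trans _ _ _ heqd heqv)

lemma aux_skeletonOf_dot (hA : A.Valid) {φ : Set (List A.M)} (hφ : IsSkeleton A φ) :
    IsSkeletonOf A φ (dot A φ) where
  nonempty := hφ.nonempty
  subset := fun s hs => ⟨s, hs, hA.equiv_refl s (hφ.subset_pos hs)⟩
  causal := hφ.causal
  uniformization := by
    rintro s a b ⟨u, hu, hequ⟩ hs
    have hlu : u.length = (s ++ [a, b]).length := by
      have := congrArg List.length (hA.equiv_lab _ _ hequ); simpa using this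
    have hun : u ≠ [] := by intro h0; subst h0; simp at hlu
    obtain ⟨u₀, c, d, rfl⟩ := aux_exists_pair u hun (hφ.even_length u hu)
    have h1 : A.equiv (u₀ ++ [c]) (s ++ [a]) := by
      refine hA.equiv_prefix _ _ _ _ hequ ⟨[d], by simp⟩ ⟨[b], by simp⟩ ?_
      simp at hlu ⊢; omega
    obtain ⟨b', ⟨hb', -⟩, -⟩ := hφ.funRepInd u₀ s c d a hu hs h1
    exact ⟨b', hb', fun y hy => hφ.funDet s a y b' hy hb'⟩

lemma aux_subeq_iff (hA : A.Valid) {φ ψ : Set (List A.M)}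
    (hφ : IsSkeleton A φ) (hψ : IsSkeleton A ψ) :
    Subeq A φ ψ ↔ dot A φ ⊆ dot A ψ := by
  constructor
  · intro hsub
    have key : ∀ n (s : List A.M), s.length = n → s ∈ φ → ∃ v ∈ ψ, A.equiv s v := by
      intro n
      induction n using Nat.strong_induction_on with
      | _ n ih =>
        intro s hn hs
        by_cases hnil : s = []
        · subst hnil
          have h0 : [] ∈ ψ := aux_nil_mem hψ.causal hψ.even_length hψ.nonempty
          exact ⟨[], h0, hA.equiv_refl [] (hψ.subset_pos h0)⟩
        · obtain ⟨s₀, a, b, rfl⟩ := aux_exists_pair s hnil (hφ.even_length s hs)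
          obtain ⟨v₀, hv₀, heq₀⟩ := ih s₀.length (by simp at hn; omega) s₀ rfl
            (hφ.causal _ _ _ hs)
          have hpos1 : s₀ ++ [a] ∈ A.pos :=
            hA.pos_prefix_closed _ _ ⟨[b], by simp⟩ (hφ.subset_pos hs)
          obtain ⟨a', ha'⟩ := hA.equiv_ext s₀ v₀ a heq₀ hpos1
          obtain ⟨b', hb', heqb⟩ := hsub s₀ a b v₀ a' hs hv₀ ha'
          exact ⟨v₀ ++ [a', b'], hb', heqb⟩
    rintro t ⟨s, hs, h⟩
    obtain ⟨v, hv, hvs⟩ := key s.length s rfl hs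
    exact ⟨v, hv, hA.equiv_trans _ _ _ (hA.equiv_symm _ _ hvs) h⟩
  · intro hsub s a b s' a' hs hs' heq
    have hmem : s ++ [a, b] ∈ dot A ψ :=
      hsub ⟨s ++ [a, b], hs, hA.equiv_refl _ (hφ.subset_pos hs)⟩
    obtain ⟨u, hu, hequ⟩ := hmem
    have hlu : u.length = (s ++ [a, b]).length := by
      have := congrArg List.length (hA.equiv_lab _ _ hequ); simpa using this
    have hun : u ≠ [] := by intro h0; subst h0; simp at hlu
    obtain ⟨u₀, c, d, rfl⟩ := aux_exists_pair u hun (hψ.even_length u hu)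
    have hu₀ : u₀ ∈ ψ := hψ.causal _ _ _ hu
    have h1 : A.equiv (u₀ ++ [c]) (s ++ [a]) := by
      refine hA.equiv_prefix _ _ _ _ hequ ⟨[d], by simp⟩ ⟨[b], by simp⟩ ?_
      simp at hlu ⊢; omega
    have h2 : A.equiv (u₀ ++ [c]) (s' ++ [a']) := hA.equiv_trans _ _ _ h1 heq
    obtain ⟨b', ⟨hb', heqb⟩, -⟩ := hψ.funRepInd u₀ s' c d a' hu hs' h2
    refine ⟨b', hb', ?_⟩
    exact hA.equiv_trans _ _ _ (hA.equiv_symm _ _ hequ) heqb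

end Aux

open AJM Game in
/-- Let `Osk` be a binary operation taking skeletons on `A` and `B` to a
skeleton on `D`, and let `O(σ, τ) = Osk(φ, ψ)•` for any skeletons `φ` of `σ`
and `ψ` of `τ`. Then `O` is well-defined (independent of the choice of
skeletons) and monotone with respect to subset inclusion of strategies iff
`Osk` is monotone with respect to the preorder `⊑` on skeletons. -/
theorem operation_welldefined_monotone_iff (A B D : Game)
    (hA : A.Valid) (hB : B.Valid) (hD : D.Valid)
    (Osk : Set (List A.M) → Set (List B.M) → Set (List D.M))
    (hOsk : ∀ φ ψ, IsSkeleton A φ → IsSkeleton B ψ → IsSkeleton D (Osk φ ψ)) :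
    ((∀ σ τ φ φ' ψ ψ', IsStrategy A σ → IsStrategy B τ →
        IsSkeletonOf A φ σ → IsSkeletonOf A φ' σ →
        IsSkeletonOf B ψ τ → IsSkeletonOf B ψ' τ →
          dot D (Osk φ ψ) = dot D (Osk φ' ψ')) ∧
     (∀ σ σ' τ τ' φ φ' ψ ψ', IsStrategy A σ → IsStrategy A σ' →
        IsStrategy B τ → IsStrategy B τ' → σ ⊆ σ' → τ ⊆ τ' →
        IsSkeletonOf A φ σ → IsSkeletonOf A φ' σ' →
        IsSkeletonOf B ψ τ → IsSkeletonOf B ψ' τ' →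
          dot D (Osk φ ψ) ⊆ dot D (Osk φ' ψ'))) ↔
    (∀ φ φ' ψ ψ', IsSkeleton A φ → IsSkeleton A φ' →
        IsSkeleton B ψ → IsSkeleton B ψ' →
        Subeq A φ φ' → Subeq B ψ ψ' → Subeq D (Osk φ ψ) (Osk φ' ψ')) := by
  constructor
  · rintro ⟨-, hmono⟩ φ φ' ψ ψ' hφ hφ' hψ hψ' hsubA hsubB
    have hσ := aux_dot_strategy hA hφ
    have hσ' := aux_dot_strategy hA hφ'
    have hτ := aux_dot_strategy hB hψ
    have hτ' := aux_dot_strategy hB hψ'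
    have hss : dot A φ ⊆ dot A φ' := (aux_subeq_iff hA hφ hφ').mp hsubA
    have htt : dot B ψ ⊆ dot B ψ' := (aux_subeq_iff hB hψ hψ').mp hsubB
    have hd := hmono (dot A φ) (dot A φ') (dot B ψ) (dot B ψ') φ φ' ψ ψ'
      hσ hσ' hτ hτ' hss htt (aux_skeletonOf_dot hA hφ) (aux_skeletonOf_dot hA hφ')
      (aux_skeletonOf_dot hB hψ) (aux_skeletonOf_dot hB hψ')
    exact (aux_subeq_iff hD (hOsk φ ψ hφ hψ) (hOsk φ' ψ' hφ' hψ')).mpr hd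
  · intro h
    have key : ∀ σ σ' τ τ' φ φ' ψ ψ', IsStrategy A σ → IsStrategy A σ' →
        IsStrategy B τ → IsStrategy B τ' → σ ⊆ σ' → τ ⊆ τ' →
        IsSkeletonOf A φ σ → IsSkeletonOf A φ' σ' →
        IsSkeletonOf B ψ τ → IsSkeletonOf B ψ' τ' →
          dot D (Osk φ ψ) ⊆ dot D (Osk φ' ψ') := by
      intro σ σ' τ τ' φ φ' ψ ψ' hσ hσ' hτ hτ' hss htt hφ hφ' hψ hψ'
      have hφs : IsSkeleton A φ := aux_isSkeleton hA hσ hφ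
      have hφ's : IsSkeleton A φ' := aux_isSkeleton hA hσ' hφ'
      have hψs : IsSkeleton B ψ := aux_isSkeleton hB hτ hψ
      have hψ's : IsSkeleton B ψ' := aux_isSkeleton hB hτ' hψ'
      have h1 : dot A φ ⊆ dot A φ' := by
        rw [aux_dot_eq hA hσ hφ, aux_dot_eq hA hσ' hφ']; exact hss
      have h2 : dot B ψ ⊆ dot B ψ' := by
        rw [aux_dot_eq hB hτ hψ, aux_dot_eq hB hτ' hψ']; exact htt
      have hsub := h φ φ' ψ ψ' hφs hφ's hψs hψ's
        ((aux_subeq_iff hA hφs hφ's).mpr h1) ((aux_subeq_iff hB hψs hψ's).mpr h2)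
      exact (aux_subeq_iff hD (hOsk φ ψ hφs hψs) (hOsk φ' ψ' hφ's hψ's)).mp hsub
    constructor
    · intro σ τ φ φ' ψ ψ' hσ hτ hφ hφ' hψ hψ'
      apply Set.Subset.antisymm
      · exact key σ σ τ τ φ φ' ψ ψ' hσ hσ hτ hτ (fun _ h => h) (fun _ h => h)
          hφ hφ' hψ hψ'
      · exact key σ σ τ τ φ' φ ψ' ψ hσ hσ hτ hτ (fun _ h => h) (fun _ h => h)
          hφ' hφ hψ' hψ
    · intro σ σ' τ τ' φ φ' ψ ψ' hσ hσ' hτ hτ' hss htt hφ hφ' hψ hψ'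
      exact key σ σ' τ τ' φ φ' ψ ψ' hσ hσ' hτ hτ' hss htt hφ hφ' hψ hψ'
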